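/- The strong-substructure relation ≼ is preserved by intersections: if A ⊆ B are finite sets of vertices with A ≼ B, then for every finite set C of vertices one has A ∩ C ≼ B ∩ C; that is, δ_r(X) > δ_r(A ∩ C) for every X with A ∩ C ⊊ X ⊆ B ∩ C. -/

import Mathlib

/-- The number of edges of `G` with both endpoints in the finite set `s`. -/
noncomputable def eCount {V : Type*} (G : SimpleGraph V) (s : Finset V) : ℕ :=
  {e : Sym2 V | e ∈ G.edgeSet ∧ ∀ v ∈ e, v ∈ s}.ncard

/-- The rational predimension `δ_r(s) = |s| - r·e(s)`. -/
noncomputable def pdimQ {V : Type*} (G : SimpleGraph V) (r : ℚ) (s : Finset V) : ℚ :=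
  (s.card : ℚ) - r * (eCount G s : ℚ)

/-- `A ≼ B`: `A ⊆ B` and `δ_r(B₀) > δ_r(A)` for every `B₀` with `A ⊊ B₀ ⊆ B`. -/
def Strong {V : Type*} (G : SimpleGraph V) (r : ℚ) (A B : Finset V) : Prop :=
  A ⊆ B ∧ ∀ B₀ : Finset V, A ⊂ B₀ → B₀ ⊆ B → pdimQ G r A < pdimQ G r B₀

lemma eSet_finite {V : Type*} (G : SimpleGraph V) (s : Finset V) :
    {e : Sym2 V | e ∈ G.edgeSet ∧ ∀ v ∈ e, v ∈ s}.Finite := by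
  apply Set.Finite.subset (Set.Finite.image (Sym2.mk (α := V)).uncurry ((s.finite_toSet.prod s.finite_toSet)))
  rintro e ⟨-, hv⟩
  induction e using Sym2.ind with
  | _ a b =>
    exact ⟨(a, b), ⟨hv a (by simp), hv b (by simp)⟩, rfl⟩

lemma eCount_submod {V : Type*} [DecidableEq V] (G : SimpleGraph V) (s t : Finset V) :
    eCount G s + eCount G t ≤ eCount G (s ∪ t) + eCount G (s ∩ t) := by
  classical
  set Es := {e : Sym2 V | e ∈ G.edgeSet ∧ ∀ v ∈ e, v ∈ s}
  set Et := {e : Sym2 V | e ∈ G.edgeSet ∧ ∀ v ∈ e, v ∈ t}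
  have hEs := eSet_finite G s
  have hEt := eSet_finite G t
  have hie : Es.ncard + Et.ncard = (Es ∪ Et).ncard + (Es ∩ Et).ncard := by
    rw [Set.ncard_union_add_ncard_inter Es Et hEs hEt]
  have h1 : (Es ∪ Et).ncard ≤ eCount G (s ∪ t) := by
    apply Set.ncard_le_ncard _ (eSet_finite G (s ∪ t))
    rintro e (⟨he, hv⟩ | ⟨he, hv⟩) <;>
      exact ⟨he, fun v hv' => Finset.mem_union.2 (by first | exact Or.inl (hv v hv') | exact Or.inr (hv v hv'))⟩
  have h2 : (Es ∩ Et).ncard = eCount G (s ∩ t) := by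
    congr 1
    ext e
    simp only [Set.mem_inter_iff, Set.mem_setOf_eq, Es, Et, Finset.mem_inter]
    constructor
    · rintro ⟨⟨he, hs⟩, ⟨-, ht⟩⟩; exact ⟨he, fun v hv => ⟨hs v hv, ht v hv⟩⟩
    · rintro ⟨he, hst⟩; exact ⟨⟨he, fun v hv => (hst v hv).1⟩, ⟨he, fun v hv => (hst v hv).2⟩⟩
  calc eCount G s + eCount G t = (Es ∪ Et).ncard + (Es ∩ Et).ncard := hie
    _ ≤ eCount G (s ∪ t) + eCount G (s ∩ t) := by rw [h2]; exact Nat.add_le_add_right h1 _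

lemma pdimQ_submod {V : Type*} [DecidableEq V] (G : SimpleGraph V) (r : ℚ) (hr0 : 0 < r)
    (s t : Finset V) :
    pdimQ G r (s ∪ t) + pdimQ G r (s ∩ t) ≤ pdimQ G r s + pdimQ G r t := by
  have hc : (s ∪ t).card + (s ∩ t).card = s.card + t.card :=
    Finset.card_union_add_card_inter s t
  have he := eCount_submod G s t
  have hcq : ((s ∪ t).card : ℚ) + ((s ∩ t).card : ℚ) = (s.card : ℚ) + (t.card : ℚ) := by
    exact_mod_cast congrArg (Nat.cast : ℕ → ℚ) hc
  have heq : (eCount G s : ℚ) + (eCount G t : ℚ) ≤ (eCount G (s ∪ t) : ℚ) + (eCount G (s ∩ t) : ℚ) := by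
    exact_mod_cast he
  simp only [pdimQ]
  nlinarith [mul_le_mul_of_nonneg_left heq hr0.le]

/-- The strong-substructure relation is preserved by intersections. -/
theorem strong_inter {V : Type*} [DecidableEq V] (G : SimpleGraph V) (r : ℚ)
    (hr0 : 0 < r) (hr1 : r < 1) (A B : Finset V) (hAB : A ⊆ B)
    (h : Strong G r A B) (C : Finset V) :
    Strong G r (A ∩ C) (B ∩ C) := by
  refine ⟨Finset.inter_subset_inter hAB (le_refl C), fun X hX hXB => ?_⟩
  have hXC : X ⊆ C := hXB.trans (Finset.inter_subset_right)
  have hACX : A ∩ C ⊆ X := hX.subset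
  -- A ∩ X = A ∩ C
  have hAX : A ∩ X = A ∩ C := by
    apply Finset.Subset.antisymm
    · exact Finset.inter_subset_inter le_rfl hXC
    · intro v hv
      exact Finset.mem_inter.2 ⟨(Finset.mem_inter.1 hv).1, hACX hv⟩
  -- A ⊂ A ∪ X
  have hAUX : A ⊂ A ∪ X := by
    obtain ⟨x, hxX, hxnAC⟩ := Finset.exists_of_ssubset hX
    refine ⟨Finset.subset_union_left, fun hsub => ?_⟩
    have : x ∈ A := hsub (Finset.mem_union_right _ hxX)
    exact hxnAC (Finset.mem_inter.2 ⟨this, hXC hxX⟩)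
  have hUB : A ∪ X ⊆ B :=
    Finset.union_subset hAB (hXB.trans Finset.inter_subset_left)
  have hmain := h.2 (A ∪ X) hAUX hUB
  have hsub := pdimQ_submod G r hr0 A X
  rw [hAX] at hsub
  linarith
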